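/- Suppose the measurement operator 𝒜 and data b arise from sampling entries of a skew-symmetric matrix at an index set Ω that is symmetric (if (r,s) ∈ Ω then (s,r) ∈ Ω, with b_{(s,r)} = -b_{(r,s)}). Then every iterate X⁽ᵗ⁾ of the SVP algorithm (Algorithm 1) with even target rank k is skew-symmetric, provided at each step the k-th and (k+1)-st singular values of the shifted residual matrix are separated. -/

import Mathlib

open Matrix

namespace SVPSkew

noncomputable def ip {n : ℕ} (X Y : Matrix (Fin n) (Fin n) ℝ) : ℝ :=
  ∑ i, ∑ j, X i j * Y i j

noncomputable def fns {n : ℕ} (X : Matrix (Fin n) (Fin n) ℝ) : ℝ := ip X X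

variable {n : ℕ}

lemma ip_eq_trace (X Y : Matrix (Fin n) (Fin n) ℝ) : ip X Y = Matrix.trace (Xᵀ * Y) := by
  rw [ip, Matrix.trace, Finset.sum_comm]
  refine Finset.sum_congr rfl fun j _ => ?_
  simp [Matrix.mul_apply, Matrix.diag]

lemma fns_nonneg (X : Matrix (Fin n) (Fin n) ℝ) : 0 ≤ fns X := by
  unfold fns ip
  exact Finset.sum_nonneg fun i _ => Finset.sum_nonneg fun j _ => mul_self_nonneg _

lemma fns_eq_zero {X : Matrix (Fin n) (Fin n) ℝ} (h : fns X = 0) : X = 0 := by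
  unfold fns ip at h
  ext i j
  rw [Matrix.zero_apply]
  have h1 := (Finset.sum_eq_zero_iff_of_nonneg
    (fun i _ => Finset.sum_nonneg fun j _ => mul_self_nonneg (X i j))).mp h i (Finset.mem_univ i)
  have h2 := (Finset.sum_eq_zero_iff_of_nonneg
    (fun j _ => mul_self_nonneg (X i j))).mp h1 j (Finset.mem_univ j)
  simpa [mul_self_eq_zero] using h2

lemma fns_add (X Z : Matrix (Fin n) (Fin n) ℝ) :
    fns (X + Z) = fns X + 2 * ip X Z + fns Z := by
  simp only [fns, ip, Matrix.add_apply, Finset.mul_sum, ← Finset.sum_add_distrib]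
  refine Finset.sum_congr rfl fun i _ => ?_
  refine Finset.sum_congr rfl fun j _ => ?_
  ring

lemma fns_sub (X Z : Matrix (Fin n) (Fin n) ℝ) :
    fns (X - Z) = fns X - 2 * ip X Z + fns Z := by
  simp only [fns, ip, Matrix.sub_apply, Finset.mul_sum, ← Finset.sum_add_distrib,
    ← Finset.sum_sub_distrib]
  refine Finset.sum_congr rfl fun i _ => ?_
  refine Finset.sum_congr rfl fun j _ => ?_
  ring

lemma mul_transpose_self_eq_zero {M : Matrix (Fin n) (Fin n) ℝ} (h : M * Mᵀ = 0) : M = 0 := by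
  ext i j
  have hii : (M * Mᵀ) i i = 0 := by rw [h]; rfl
  rw [Matrix.mul_apply] at hii
  simp only [Matrix.transpose_apply] at hii
  have := (Finset.sum_eq_zero_iff_of_nonneg
    (fun l _ => mul_self_nonneg (M i l))).mp hii j (Finset.mem_univ j)
  simpa [mul_self_eq_zero] using this



lemma conjT_eq_transpose {m : ℕ} (M : Matrix (Fin m) (Fin m) ℝ) : Mᴴ = Mᵀ := by
  ext i j; simp

lemma exists_proj (k : ℕ) (Y : Matrix (Fin n) (Fin n) ℝ) (hYr : Y.rank ≤ k) :
    ∃ Q : Matrix (Fin n) (Fin n) ℝ, Qᵀ = Q ∧ Q * Q = Q ∧ Q * Y = Y ∧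
      Matrix.trace Q ≤ (k : ℝ) := by
  classical
  have hG : (Y * Yᵀ).IsHermitian := by
    rw [← conjT_eq_transpose]; exact Matrix.isHermitian_mul_conjTranspose_self Y
  set μ : Fin n → ℝ := hG.eigenvalues with hμ
  obtain ⟨W, hW1, hW2, hspec⟩ : ∃ W : Matrix (Fin n) (Fin n) ℝ,
      Wᵀ * W = 1 ∧ W * Wᵀ = 1 ∧ Y * Yᵀ = W * Matrix.diagonal μ * Wᵀ := by
    refine ⟨(hG.eigenvectorUnitary : Matrix (Fin n) (Fin n) ℝ), ?_, ?_, ?_⟩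
    · have := Matrix.mem_unitaryGroup_iff'.mp hG.eigenvectorUnitary.2
      rwa [Matrix.star_eq_conjTranspose, conjT_eq_transpose] at this
    · have := Matrix.mem_unitaryGroup_iff.mp hG.eigenvectorUnitary.2
      rwa [Matrix.star_eq_conjTranspose, conjT_eq_transpose] at this
    · have := hG.spectral_theorem
      rwa [Unitary.conjStarAlgAut_apply, Matrix.star_eq_conjTranspose, conjT_eq_transpose,
        show (RCLike.ofReal ∘ μ : Fin n → ℝ) = μ from by ext i; simp] at this
  set d0 : Fin n → ℝ := fun i => if μ i = 0 then 0 else 1 with hd0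
  set Q : Matrix (Fin n) (Fin n) ℝ := W * Matrix.diagonal d0 * Wᵀ with hQ
  have hQt : Qᵀ = Q := by
    rw [hQ, Matrix.transpose_mul, Matrix.transpose_mul, Matrix.transpose_transpose,
      Matrix.diagonal_transpose, mul_assoc]
  have hd00 : (fun i => d0 i * d0 i) = d0 := by
    funext i; by_cases h : μ i = 0 <;> simp [hd0, h]
  have hd0μ : (fun i => d0 i * μ i) = μ := by
    funext i; by_cases h : μ i = 0 <;> simp [hd0, h]
  have hQQ : Q * Q = Q := by
    rw [hQ]
    calc W * Matrix.diagonal d0 * Wᵀ * (W * Matrix.diagonal d0 * Wᵀ)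
        = W * (Matrix.diagonal d0 * (Wᵀ * W) * Matrix.diagonal d0) * Wᵀ := by
          simp only [mul_assoc]
      _ = W * (Matrix.diagonal d0 * Matrix.diagonal d0) * Wᵀ := by rw [hW1, mul_one]
      _ = W * Matrix.diagonal d0 * Wᵀ := by rw [Matrix.diagonal_mul_diagonal, hd00]
  have hQG : Q * (Y * Yᵀ) = Y * Yᵀ := by
    rw [hspec, hQ]
    calc W * Matrix.diagonal d0 * Wᵀ * (W * Matrix.diagonal μ * Wᵀ)
        = W * (Matrix.diagonal d0 * (Wᵀ * W) * Matrix.diagonal μ) * Wᵀ := by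
          simp only [mul_assoc]
      _ = W * (Matrix.diagonal d0 * Matrix.diagonal μ) * Wᵀ := by rw [hW1, mul_one]
      _ = W * Matrix.diagonal μ * Wᵀ := by rw [Matrix.diagonal_mul_diagonal, hd0μ]
  have hGt : (Y * Yᵀ)ᵀ = Y * Yᵀ := by
    rw [Matrix.transpose_mul, Matrix.transpose_transpose]
  have hGQ : (Y * Yᵀ) * Q = Y * Yᵀ := by
    have h := congrArg Matrix.transpose hQG
    rwa [Matrix.transpose_mul, hQt, hGt] at h
  have hQY : Q * Y = Y := by
    have hzero : (Q * Y - Y) * (Q * Y - Y)ᵀ = 0 := by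
      have e1 : (Q * Y - Y)ᵀ = Yᵀ * Q - Yᵀ := by
        rw [Matrix.transpose_sub, Matrix.transpose_mul, hQt]
      rw [e1, Matrix.mul_sub, Matrix.sub_mul, Matrix.sub_mul]
      have e2 : Q * Y * (Yᵀ * Q) = Y * Yᵀ := by
        rw [← Matrix.mul_assoc, Matrix.mul_assoc Q Y Yᵀ, hQG, hGQ]
      have e3 : Q * Y * Yᵀ = Y * Yᵀ := by rw [Matrix.mul_assoc]; exact hQG
      have e4 : Y * (Yᵀ * Q) = Y * Yᵀ := by rw [← Matrix.mul_assoc]; exact hGQ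
      rw [e2, e3, e4]
      abel
    have := mul_transpose_self_eq_zero hzero
    rwa [sub_eq_zero] at this
  have htr : Matrix.trace Q = (Y.rank : ℝ) := by
    have h1 : Matrix.trace Q = Matrix.trace (Matrix.diagonal d0) := by
      rw [hQ, Matrix.trace_mul_cycle, hW1, Matrix.one_mul]
    have h2 : Matrix.trace (Matrix.diagonal d0) =
        ((Finset.univ.filter fun i => μ i ≠ 0).card : ℝ) := by
      rw [Matrix.trace_diagonal]
      rw [show (∑ i, d0 i) = ∑ i, (if μ i ≠ 0 then (1:ℝ) else 0) from
        Finset.sum_congr rfl fun i _ => by by_cases h : μ i = 0 <;> simp [hd0, h]]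
      rw [Finset.sum_boole]
    have h3 : Y.rank = (Y * Yᵀ).rank := by
      rw [← conjT_eq_transpose, Matrix.rank_self_mul_conjTranspose]
    have h4 : (Y * Yᵀ).rank = Fintype.card {i // μ i ≠ 0} := hG.rank_eq_card_non_zero_eigs
    rw [h1, h2, h3, h4, Fintype.card_subtype]
  refine ⟨Q, hQt, hQQ, hQY, ?_⟩
  rw [htr]
  exact_mod_cast hYr



lemma core (k : ℕ) (A Y : Matrix (Fin n) (Fin n) ℝ) (hA : Aᵀ = -A)
    (lam : Fin n → ℝ) (hlam : Aᵀ * A = Matrix.diagonal lam)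
    (β : ℝ) (hβ : 0 ≤ β) (T : Finset (Fin n)) (hT : T.card = k)
    (hTin : ∀ i ∈ T, β < lam i) (hTout : ∀ i ∉ T, lam i ≤ β)
    (hYr : Y.rank ≤ k)
    (hmin : ∀ Z : Matrix (Fin n) (Fin n) ℝ, Z.rank ≤ k → fns (A - Y) ≤ fns (A - Z)) :
    Yᵀ = -Y := by
  classical
  obtain ⟨Q, hQt, hQQ, hQY, hQtr⟩ := exists_proj k Y hYr
  -- skew entries
  have haij : ∀ i j, A j i = -A i j := by
    intro i j
    have := congrFun (congrFun hA i) j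
    simpa [Matrix.transpose_apply, Matrix.neg_apply] using this
  -- lam as row sums of squares
  have hrow : ∀ i, lam i = ∑ j, A i j * A i j := by
    intro i
    have := congrFun (congrFun hlam i) i
    rw [Matrix.diagonal_apply_eq, Matrix.mul_apply] at this
    rw [← this]
    refine Finset.sum_congr rfl fun j _ => ?_
    rw [Matrix.transpose_apply, haij i j]
    ring
  -- the other Gram matrix
  have hS' : A * Aᵀ = Matrix.diagonal lam := by
    calc A * Aᵀ = -(A * A) := by rw [hA, Matrix.mul_neg]
      _ = (-A) * A := by rw [Matrix.neg_mul]
      _ = Aᵀ * A := by rw [hA]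
      _ = Matrix.diagonal lam := hlam
  -- A i j = 0 when lam i ≠ lam j
  have hcomm : ∀ i j, lam i ≠ lam j → A i j = 0 := by
    intro i j hij
    have h1 : A * (Aᵀ * A) = (A * Aᵀ) * A := by rw [Matrix.mul_assoc]
    rw [hlam, hS'] at h1
    have h2 := congrFun (congrFun h1 i) j
    rw [Matrix.mul_diagonal, Matrix.diagonal_mul] at h2
    have h3 : A i j * (lam j - lam i) = 0 := by linear_combination h2
    rcases mul_eq_zero.mp h3 with h | h
    · exact h
    · exact absurd (by linarith : lam i = lam j) hij
  -- the target comparison matrix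
  set d : Fin n → ℝ := fun i => if i ∈ T then 1 else 0 with hd
  set D : Matrix (Fin n) (Fin n) ℝ := Matrix.diagonal d with hD
  have hDrank : (D * A).rank ≤ k := by
    refine le_trans (Matrix.rank_mul_le_left D A) ?_
    rw [hD, Matrix.rank_diagonal]
    have he : {i // d i ≠ 0} ≃ {i // i ∈ T} :=
      Equiv.subtypeEquivRight (fun i => by by_cases h : i ∈ T <;> simp [hd, h])
    rw [Fintype.card_congr he, Fintype.card_coe, hT]
  -- fns (A - D * A)
  have hDA : ∀ i j, (A - D * A) i j = (1 - d i) * A i j := by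
    intro i j
    rw [Matrix.sub_apply, hD, Matrix.diagonal_mul]
    ring
  have hfnsDA : fns (A - D * A) = ∑ i, (1 - d i) * lam i := by
    unfold fns ip
    refine Finset.sum_congr rfl fun i _ => ?_
    rw [show (∑ j, (A - D * A) i j * (A - D * A) i j)
        = ∑ j, (1 - d i) * (1 - d i) * (A i j * A i j) from
      Finset.sum_congr rfl fun j _ => by rw [hDA]; ring]
    rw [← Finset.mul_sum, ← hrow]
    have : (1 - d i) * (1 - d i) = 1 - d i := by
      by_cases h : i ∈ T <;> simp [hd, h]
    rw [this]
  -- Pythagoras and trace computation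
  have hcross : ip (A - Q * A) (Q * A - Y) = 0 := by
    rw [ip_eq_trace]
    have hzero : (A - Q * A)ᵀ * (Q * A - Y) = 0 := by
      rw [Matrix.transpose_sub, Matrix.transpose_mul, hQt]
      rw [Matrix.sub_mul, Matrix.mul_sub, Matrix.mul_sub]
      have e1 : Aᵀ * Q * (Q * A) = Aᵀ * (Q * A) := by
        rw [Matrix.mul_assoc, ← Matrix.mul_assoc Q Q A, hQQ]
      have e2 : Aᵀ * Q * Y = Aᵀ * Y := by rw [Matrix.mul_assoc, hQY]
      rw [e1, e2]
      abel
    rw [hzero, Matrix.trace_zero]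
  have hsplit : fns (A - Y) = fns (A - Q * A) + fns (Q * A - Y) := by
    have : A - Y = (A - Q * A) + (Q * A - Y) := by abel
    rw [this, fns_add, hcross]
    ring
  have htrAQA : (Aᵀ * Q * A).trace = ∑ i, lam i * Q i i := by
    rw [Matrix.trace_mul_cycle, hS', Matrix.trace]
    refine Finset.sum_congr rfl fun i _ => ?_
    rw [Matrix.diag_apply, Matrix.diagonal_mul]
  have hipAQA : ip A (Q * A) = ∑ i, lam i * Q i i := by
    rw [ip_eq_trace, ← Matrix.mul_assoc]; exact htrAQA
  have hfnsQA : fns (Q * A) = ∑ i, lam i * Q i i := by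
    rw [fns, ip_eq_trace, Matrix.transpose_mul, hQt]
    rw [show Aᵀ * Q * (Q * A) = Aᵀ * Q * A from by
      rw [Matrix.mul_assoc, ← Matrix.mul_assoc Q Q A, hQQ, ← Matrix.mul_assoc]]
    exact htrAQA
  have hAQA : fns (A - Q * A) = fns A - ∑ i, lam i * Q i i := by
    rw [fns_sub, hipAQA, hfnsQA]; ring
  have hfnsA : fns A = ∑ i, lam i := by
    unfold fns ip
    exact Finset.sum_congr rfl fun i _ => (hrow i).symm
  -- diagonal entries of Q
  have hcQ : ∀ i, Q i i = ∑ j, Q i j * Q i j := by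
    intro i
    have := congrFun (congrFun hQQ.symm i) i
    rw [Matrix.mul_apply] at this
    rw [this]
    refine Finset.sum_congr rfl fun j _ => ?_
    have : Q j i = Q i j := by
      have := congrFun (congrFun hQt i) j
      simpa [Matrix.transpose_apply] using this
    rw [this]
  have hc0 : ∀ i, 0 ≤ Q i i := fun i => by
    rw [hcQ i]; exact Finset.sum_nonneg fun j _ => mul_self_nonneg _
  have hc1 : ∀ i, Q i i ≤ 1 := by
    intro i
    have hsum : Q i i * Q i i ≤ ∑ j, Q i j * Q i j :=
      Finset.single_le_sum (f := fun j => Q i j * Q i j)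
        (fun j _ => mul_self_nonneg _) (Finset.mem_univ i)
    nlinarith [hc0 i, hcQ i, hsum]
  have htrsum : ∑ i, Q i i ≤ (k : ℝ) := by
    have : Matrix.trace Q = ∑ i, Q i i := rfl
    linarith [hQtr, this ▸ hQtr]
  -- main inequality
  have hineq : fns (Q * A - Y) + ((∑ i ∈ T, lam i)
      - (∑ i ∈ T, lam i * Q i i) - (∑ i ∈ Tᶜ, lam i * Q i i)) ≤ 0 := by
    have h1 : fns (A - Y) ≤ ∑ i, (1 - d i) * lam i := by
      rw [← hfnsDA]; exact hmin (D * A) hDrank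
    have h2 : ∑ i, (1 - d i) * lam i = (∑ i, lam i) - ∑ i ∈ T, lam i := by
      rw [show (∑ i, (1 - d i) * lam i) = (∑ i, lam i) - ∑ i, d i * lam i from by
        rw [← Finset.sum_sub_distrib]; exact Finset.sum_congr rfl fun i _ => by ring]
      congr 1
      rw [← Finset.sum_add_sum_compl T (fun i => d i * lam i)]
      rw [show (∑ i ∈ Tᶜ, d i * lam i) = 0 from Finset.sum_eq_zero fun i hi => by
        simp [hd, (Finset.mem_compl.mp hi)]]
      rw [add_zero]
      exact Finset.sum_congr rfl fun i hi => by simp [hd, hi]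
    have h3 : (∑ i, lam i * Q i i) = (∑ i ∈ T, lam i * Q i i) + ∑ i ∈ Tᶜ, lam i * Q i i :=
      (Finset.sum_add_sum_compl T _).symm
    have h4 := hsplit
    rw [hAQA, hfnsA] at h4
    linarith [h1, h2, h3, h4]
  -- nonnegativity of the three error terms
  have hE1 : (0:ℝ) ≤ ∑ i ∈ T, (lam i - β) * (1 - Q i i) :=
    Finset.sum_nonneg fun i hi => mul_nonneg (by linarith [hTin i hi]) (by linarith [hc1 i])
  have hE2 : (0:ℝ) ≤ ∑ i ∈ Tᶜ, Q i i * (β - lam i) :=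
    Finset.sum_nonneg fun i hi =>
      mul_nonneg (hc0 i) (by linarith [hTout i (Finset.mem_compl.mp hi)])
  have hE3 : (0:ℝ) ≤ β * ((k:ℝ) - ∑ i, Q i i) := mul_nonneg hβ (by linarith [htrsum])
  -- identity: E = E1 + E2 + E3
  have hEid : (∑ i ∈ T, lam i) - (∑ i ∈ T, lam i * Q i i) - (∑ i ∈ Tᶜ, lam i * Q i i)
      = (∑ i ∈ T, (lam i - β) * (1 - Q i i)) + (∑ i ∈ Tᶜ, Q i i * (β - lam i))
        + β * ((k:ℝ) - ∑ i, Q i i) := by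
    have e1 : ∑ i ∈ T, (lam i - β) * (1 - Q i i)
        = (∑ i ∈ T, lam i) - (∑ i ∈ T, lam i * Q i i) - β * k + β * ∑ i ∈ T, Q i i := by
      rw [show (∑ i ∈ T, (lam i - β) * (1 - Q i i))
          = ∑ i ∈ T, (lam i - lam i * Q i i - β + β * Q i i) from
        Finset.sum_congr rfl fun i _ => by ring]
      rw [Finset.sum_add_distrib, Finset.sum_sub_distrib, Finset.sum_sub_distrib,
        Finset.sum_const, hT, ← Finset.mul_sum, nsmul_eq_mul]
      ring
    have e2 : ∑ i ∈ Tᶜ, Q i i * (β - lam i)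
        = β * (∑ i ∈ Tᶜ, Q i i) - ∑ i ∈ Tᶜ, lam i * Q i i := by
      rw [show (∑ i ∈ Tᶜ, Q i i * (β - lam i))
          = ∑ i ∈ Tᶜ, (β * Q i i - lam i * Q i i) from
        Finset.sum_congr rfl fun i _ => by ring]
      rw [Finset.sum_sub_distrib, ← Finset.mul_sum]
    have e3 : (∑ i, Q i i) = (∑ i ∈ T, Q i i) + ∑ i ∈ Tᶜ, Q i i :=
      (Finset.sum_add_sum_compl T _).symm
    rw [e1, e2, e3]
    ring
  -- conclude all slack terms vanish
  have hfQAY : fns (Q * A - Y) = 0 := by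
    have := fns_nonneg (Q * A - Y)
    linarith [hineq, hEid ▸ (by linarith [hE1, hE2, hE3] :
      (0:ℝ) ≤ (∑ i ∈ T, (lam i - β) * (1 - Q i i)) + (∑ i ∈ Tᶜ, Q i i * (β - lam i))
        + β * ((k:ℝ) - ∑ i, Q i i))]
  have hE1z : ∑ i ∈ T, (lam i - β) * (1 - Q i i) = 0 := by
    rw [hEid] at hineq
    linarith [fns_nonneg (Q * A - Y), hE1, hE2, hE3]
  have hcT1 : ∀ i ∈ T, Q i i = 1 := by
    intro i hi
    have h := (Finset.sum_eq_zero_iff_of_nonneg (fun i hi =>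
      mul_nonneg (by linarith [hTin i hi]) (by linarith [hc1 i]))).mp hE1z i hi
    rcases mul_eq_zero.mp h with h' | h'
    · exact absurd (by linarith : lam i ≤ β) (not_le.mpr (hTin i hi))
    · linarith
  have hcT0 : ∀ i ∉ T, Q i i = 0 := by
    intro i hi
    have hsT : ∑ i ∈ T, Q i i = (k : ℝ) := by
      rw [Finset.sum_congr rfl (fun i hi => hcT1 i hi), Finset.sum_const, hT]
      simp
    have hsC : ∑ i ∈ Tᶜ, Q i i ≤ 0 := by
      have := (Finset.sum_add_sum_compl T fun i => Q i i)
      linarith [htrsum]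
    have := (Finset.sum_eq_zero_iff_of_nonneg (fun i _ => hc0 i)).mp
      (le_antisymm hsC (Finset.sum_nonneg fun i _ => hc0 i)) i (Finset.mem_compl.mpr hi)
    exact this
  -- Q = D
  have hQD : Q = D := by
    ext i j
    by_cases hi : i ∈ T
    · have h1 : Q i i = 1 := hcT1 i hi
      by_cases hij : j = i
      · subst hij; rw [hD, Matrix.diagonal_apply_eq]; simp [hd, hi, h1]
      · have hrest : ∑ l ∈ Finset.univ.erase i, Q i l * Q i l = 0 := by
          have := hcQ i
          rw [← Finset.add_sum_erase _ _ (Finset.mem_univ i)] at this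
          nlinarith [this, h1]
        have := (Finset.sum_eq_zero_iff_of_nonneg (fun l _ => mul_self_nonneg (Q i l))).mp
          hrest j (Finset.mem_erase.mpr ⟨hij, Finset.mem_univ j⟩)
        rw [mul_self_eq_zero] at this
        rw [this, hD, Matrix.diagonal_apply, if_neg (fun h => hij h.symm)]
    · have h0 : Q i i = 0 := hcT0 i hi
      have hall : ∑ l, Q i l * Q i l = 0 := by rw [← hcQ i, h0]
      have := (Finset.sum_eq_zero_iff_of_nonneg (fun l _ => mul_self_nonneg (Q i l))).mp
        hall j (Finset.mem_univ j)
      rw [mul_self_eq_zero] at this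
      rw [this, hD]
      by_cases hij : i = j
      · subst hij; rw [Matrix.diagonal_apply_eq]; simp [hd, hi]
      · rw [Matrix.diagonal_apply, if_neg hij]
  -- Y = D * A
  have hYDA : Y = D * A := by
    have := fns_eq_zero hfQAY
    have hQA : Q * A = Y := by
      have h := sub_eq_zero.mp this
      exact h
    rw [← hQA, hQD]
  -- D commutes with A
  have hADDA : A * D = D * A := by
    ext i j
    rw [hD, Matrix.mul_diagonal, Matrix.diagonal_mul]
    by_cases hi : i ∈ T <;> by_cases hj : j ∈ T
    · simp [hd, hi, hj]
    · rw [hcomm i j (by have := hTin i hi; have := hTout j hj; intro h; linarith)]; ring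
    · rw [hcomm i j (by have := hTin j hj; have := hTout i hi; intro h; linarith)]; ring
    · simp [hd, hi, hj]
  -- conclude
  have hfin : (D * A)ᵀ = -(D * A) := by
    calc (D * A)ᵀ = Aᵀ * Dᵀ := Matrix.transpose_mul D A
      _ = Aᵀ * D := by rw [hD, Matrix.diagonal_transpose]
      _ = -A * D := by rw [hA]
      _ = -(A * D) := by rw [Matrix.neg_mul]
      _ = -(D * A) := by rw [hADDA]
  rw [hYDA]
  exact hfin



end SVPSkew

/-- The Frobenius norm of a real matrix. -/
noncomputable def frobNorm {n : ℕ} (M : Matrix (Fin n) (Fin n) ℝ) : ℝ :=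
  Real.sqrt (∑ i, ∑ j, (M i j) ^ 2)

/-- The singular values of a real square matrix: square roots of the eigenvalues
of `AᴴA = AᵀA`. -/
noncomputable def singVals {n : ℕ} (A : Matrix (Fin n) (Fin n) ℝ) : Fin n → ℝ :=
  fun i => Real.sqrt ((Matrix.isHermitian_conjTranspose_mul_self A).eigenvalues i)

namespace SVPSkew

variable {n : ℕ}

lemma frobNorm_eq_sqrt_fns (X : Matrix (Fin n) (Fin n) ℝ) :
    frobNorm X = Real.sqrt (fns X) := by
  unfold frobNorm fns ip
  congr 1
  refine Finset.sum_congr rfl fun i _ => Finset.sum_congr rfl fun j _ => ?_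
  rw [sq]

lemma fns_le_of_frob {X Z : Matrix (Fin n) (Fin n) ℝ} (h : frobNorm X ≤ frobNorm Z) :
    fns X ≤ fns Z := by
  rw [frobNorm_eq_sqrt_fns, frobNorm_eq_sqrt_fns] at h
  calc fns X = Real.sqrt (fns X) ^ 2 := (Real.sq_sqrt (fns_nonneg X)).symm
    _ ≤ Real.sqrt (fns Z) ^ 2 := by
        exact pow_le_pow_left₀ (Real.sqrt_nonneg _) h 2
    _ = fns Z := Real.sq_sqrt (fns_nonneg Z)

lemma step (k : ℕ) (hk0 : 0 < k) (hkn : k < n)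
    (A Y : Matrix (Fin n) (Fin n) ℝ) (hA : Aᵀ = -A)
    (hYr : Y.rank ≤ k)
    (hmin : ∀ Z : Matrix (Fin n) (Fin n) ℝ, Z.rank ≤ k →
      frobNorm (A - Y) ≤ frobNorm (A - Z))
    (g : Equiv.Perm (Fin n))
    (hsort : ∀ i j : Fin n, i ≤ j → singVals A (g j) ≤ singVals A (g i))
    (hgap : singVals A (g ⟨k, hkn⟩) < singVals A (g ⟨k - 1, by omega⟩)) :
    Yᵀ = -Y := by
  classical
  have hS : (Aᵀ * A).IsHermitian := Matrix.isHermitian_conjTranspose_mul_self A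
  set lam : Fin n → ℝ := hS.eigenvalues with hlamdef
  have hsing : ∀ i, singVals A i = Real.sqrt (lam i) := fun i => rfl
  have hlamnn : ∀ i, 0 ≤ lam i := by
    intro i
    have hps : (Aᵀ * A).PosSemidef := by
      have := Matrix.posSemidef_conjTranspose_mul_self A
      rwa [conjT_eq_transpose] at this
    exact hps.eigenvalues_nonneg i
  obtain ⟨V, hV1, hV2, hspec⟩ : ∃ V : Matrix (Fin n) (Fin n) ℝ,
      Vᵀ * V = 1 ∧ V * Vᵀ = 1 ∧ Aᵀ * A = V * Matrix.diagonal lam * Vᵀ := by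
    refine ⟨(hS.eigenvectorUnitary : Matrix (Fin n) (Fin n) ℝ), ?_, ?_, ?_⟩
    · have := Matrix.mem_unitaryGroup_iff'.mp hS.eigenvectorUnitary.2
      rwa [Matrix.star_eq_conjTranspose, conjT_eq_transpose] at this
    · have := Matrix.mem_unitaryGroup_iff.mp hS.eigenvectorUnitary.2
      rwa [Matrix.star_eq_conjTranspose, conjT_eq_transpose] at this
    · have := hS.spectral_theorem
      rwa [Unitary.conjStarAlgAut_apply, Matrix.star_eq_conjTranspose, conjT_eq_transpose,
        show (RCLike.ofReal ∘ lam : Fin n → ℝ) = lam from by ext i; simp] at this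
  -- the sorted index set
  set T : Finset (Fin n) := (Finset.univ.filter fun j : Fin n => (j : ℕ) < k).image g
    with hTdef
  have hTcard : T.card = k := by
    rw [hTdef, Finset.card_image_of_injective _ g.injective]
    have he : (Finset.univ.filter fun j : Fin n => (j : ℕ) < k) =
        Finset.map (Fin.castLEEmb hkn.le) Finset.univ := by
      ext x
      simp only [Finset.mem_filter, Finset.mem_univ, true_and, Finset.mem_map,
        Fin.castLEEmb_apply]
      constructor
      · intro hx; exact ⟨⟨x, hx⟩, rfl⟩
      · rintro ⟨y, rfl⟩; exact y.2
    rw [he, Finset.card_map, Finset.card_univ, Fintype.card_fin]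
  have hTin : ∀ i ∈ T, lam (g ⟨k, hkn⟩) < lam i := by
    intro i hi
    rw [hTdef, Finset.mem_image] at hi
    obtain ⟨j, hj, rfl⟩ := hi
    have hjk : (j : ℕ) < k := (Finset.mem_filter.mp hj).2
    have hle : j ≤ (⟨k - 1, by omega⟩ : Fin n) := by
      rw [Fin.le_def]; simp; omega
    have h2 := lt_of_lt_of_le hgap (hsort j ⟨k - 1, by omega⟩ hle)
    by_contra hcon
    push_neg at hcon
    exact absurd h2 (not_lt.mpr (by rw [hsing, hsing]; exact Real.sqrt_le_sqrt hcon))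
  have hTout : ∀ i ∉ T, lam i ≤ lam (g ⟨k, hkn⟩) := by
    intro i hi
    have hik : ¬ ((g.symm i : ℕ) < k) := by
      intro hc
      exact hi (hTdef ▸ Finset.mem_image.mpr
        ⟨g.symm i, Finset.mem_filter.mpr ⟨Finset.mem_univ _, hc⟩, g.apply_symm_apply i⟩)
    have hle : (⟨k, hkn⟩ : Fin n) ≤ g.symm i := by
      rw [Fin.le_def]; simp; omega
    have h1 := hsort ⟨k, hkn⟩ (g.symm i) hle
    rw [g.apply_symm_apply] at h1
    by_contra hcon
    push_neg at hcon
    have := Real.sqrt_lt_sqrt (hlamnn _) hcon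
    rw [← hsing, ← hsing] at this
    exact absurd h1 (not_le.mpr this)
  -- frobenius invariance under the orthogonal conjugation
  have hinv : ∀ B : Matrix (Fin n) (Fin n) ℝ, fns (Vᵀ * B * V) = fns B := by
    intro B
    rw [fns, fns, ip_eq_trace, ip_eq_trace]
    have e : (Vᵀ * B * V)ᵀ * (Vᵀ * B * V) = Vᵀ * (Bᵀ * B) * V := by
      simp only [Matrix.transpose_mul, Matrix.transpose_transpose, Matrix.mul_assoc]
      rw [← Matrix.mul_assoc V Vᵀ (B * V), hV2, Matrix.one_mul, ← Matrix.mul_assoc Bᵀ B V]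
    rw [e, Matrix.trace_mul_cycle, hV2, Matrix.one_mul]
  -- transported data
  have hA' : (Vᵀ * A * V)ᵀ = -(Vᵀ * A * V) := by
    calc (Vᵀ * A * V)ᵀ = Vᵀ * (Aᵀ * V) := by
          rw [Matrix.transpose_mul, Matrix.transpose_mul, Matrix.transpose_transpose]
      _ = -(Vᵀ * A * V) := by
          rw [hA, Matrix.neg_mul, Matrix.mul_neg, ← Matrix.mul_assoc]
  have hlam' : (Vᵀ * A * V)ᵀ * (Vᵀ * A * V) = Matrix.diagonal lam := by
    have e : (Vᵀ * A * V)ᵀ * (Vᵀ * A * V) = Vᵀ * (Aᵀ * A) * V := by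
      simp only [Matrix.transpose_mul, Matrix.transpose_transpose, Matrix.mul_assoc]
      rw [← Matrix.mul_assoc V Vᵀ (A * V), hV2, Matrix.one_mul, ← Matrix.mul_assoc Aᵀ A V]
    rw [e, hspec]
    simp only [Matrix.mul_assoc]
    rw [← Matrix.mul_assoc V (Matrix.diagonal lam) (Vᵀ * V), hV1, Matrix.mul_one,
      ← Matrix.mul_assoc, hV1, Matrix.one_mul]
  have hYr' : (Vᵀ * Y * V).rank ≤ k :=
    le_trans (Matrix.rank_mul_le_left _ _) (le_trans (Matrix.rank_mul_le_right _ _) hYr)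
  have hmin' : ∀ Z' : Matrix (Fin n) (Fin n) ℝ, Z'.rank ≤ k →
      fns (Vᵀ * A * V - Vᵀ * Y * V) ≤ fns (Vᵀ * A * V - Z') := by
    intro Z' hZ'
    have hZ : (V * Z' * Vᵀ).rank ≤ k :=
      le_trans (Matrix.rank_mul_le_left _ _) (le_trans (Matrix.rank_mul_le_right _ _) hZ')
    have h := fns_le_of_frob (hmin _ hZ)
    have hAY : Vᵀ * (A - Y) * V = Vᵀ * A * V - Vᵀ * Y * V := by
      rw [Matrix.mul_sub, Matrix.sub_mul]
    have hAZ : Vᵀ * (A - V * Z' * Vᵀ) * V = Vᵀ * A * V - Z' := by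
      rw [Matrix.mul_sub, Matrix.sub_mul]
      congr 1
      simp only [Matrix.mul_assoc]
      rw [hV1, Matrix.mul_one, ← Matrix.mul_assoc, hV1, Matrix.one_mul]
    rw [← hAY, ← hAZ, hinv, hinv]
    exact h
  have hY' : (Vᵀ * Y * V)ᵀ = -(Vᵀ * Y * V) :=
    core k (Vᵀ * A * V) (Vᵀ * Y * V) hA' lam hlam' (lam (g ⟨k, hkn⟩)) (hlamnn _)
      T hTcard hTin hTout hYr' hmin'
  have hYrec : V * (Vᵀ * Y * V) * Vᵀ = Y := by
    simp only [Matrix.mul_assoc]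
    rw [hV2, Matrix.mul_one, ← Matrix.mul_assoc, hV2, Matrix.one_mul]
  calc Yᵀ = (V * (Vᵀ * Y * V) * Vᵀ)ᵀ := by rw [hYrec]
    _ = V * (Vᵀ * Y * V)ᵀ * Vᵀ := by
        rw [Matrix.transpose_mul, Matrix.transpose_mul, Matrix.transpose_transpose,
          ← Matrix.mul_assoc]
    _ = V * (-(Vᵀ * Y * V)) * Vᵀ := by rw [hY']
    _ = -(V * (Vᵀ * Y * V) * Vᵀ) := by rw [Matrix.mul_neg, Matrix.neg_mul]
    _ = -Y := by rw [hYrec]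

end SVPSkew

/-- If the sampled data come from a skew-symmetric matrix (symmetric index set `Ω`
with antisymmetric values `b`), then every iterate of the SVP algorithm with even
target rank `k` is skew-symmetric, provided at each step the `k`-th and `(k+1)`-st
largest singular values of the shifted residual matrix are separated. -/
theorem svp_iterates_skew (n k : ℕ) (hk : Even k) (hk0 : 0 < k) (hkn : k < n)
    (Ω : Finset (Fin n × Fin n)) (hΩ : ∀ p : Fin n × Fin n, p ∈ Ω → (p.2, p.1) ∈ Ω)
    (b : Fin n × Fin n → ℝ) (hb : ∀ p ∈ Ω, b (p.2, p.1) = -b p)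
    (η : ℝ)
    (M : Matrix (Fin n) (Fin n) ℝ → Matrix (Fin n) (Fin n) ℝ)
    (hM : ∀ X, M X = Matrix.of fun r s =>
      if (r, s) ∈ Ω then X r s - η * (X r s - b (r, s)) else 0)
    (X : ℕ → Matrix (Fin n) (Fin n) ℝ) (hX0 : X 0 = 0)
    (hXr : ∀ t, (X (t + 1)).rank ≤ k)
    (hXbest : ∀ t, ∀ Z : Matrix (Fin n) (Fin n) ℝ, Z.rank ≤ k →
      frobNorm (M (X t) - X (t + 1)) ≤ frobNorm (M (X t) - Z))
    (hsep : ∀ t, ∃ g : Equiv.Perm (Fin n),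
      (∀ i j : Fin n, i ≤ j → singVals (M (X t)) (g j) ≤ singVals (M (X t)) (g i)) ∧
      singVals (M (X t)) (g ⟨k, hkn⟩) < singVals (M (X t)) (g ⟨k - 1, by omega⟩)) :
    ∀ t, (X t)ᵀ = -(X t) := by
  intro t
  induction t with
  | zero => rw [hX0, Matrix.transpose_zero, neg_zero]
  | succ t ih =>
    have hAskew : (M (X t))ᵀ = -(M (X t)) := by
      rw [hM (X t)]
      ext i j
      rw [Matrix.transpose_apply, Matrix.neg_apply, Matrix.of_apply, Matrix.of_apply]
      by_cases h : (i, j) ∈ Ω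
      · have h' : (j, i) ∈ Ω := hΩ (i, j) h
        rw [if_pos h', if_pos h]
        have hXji : X t j i = -(X t i j) := by
          have := congrFun (congrFun ih i) j
          simpa [Matrix.transpose_apply, Matrix.neg_apply] using this
        have hbji : b (j, i) = -b (i, j) := hb (i, j) h
        rw [hXji, hbji]; ring
      · have h' : (j, i) ∉ Ω := fun hc => h (hΩ (j, i) hc)
        rw [if_neg h', if_neg h, neg_zero]
    obtain ⟨g, hsort, hgap⟩ := hsep t
    exact SVPSkew.step k hk0 hkn (M (X t)) (X (t + 1)) hAskew (hXr t) (hXbest t) g hsort hgap
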